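/- Let 1 ≤ p₁ < p₂ < q < ∞ and v, w ∈ ℕ with q/p₂ < v/w < q/p₁. Define x_j = 1 if j ∈ {0,1} ∪ ⋃_{n≥1} S_n and x_j = 0 otherwise, where S_n = {1 + 2^v + ⋯ + 2^{(n−1)v} + j·2^{nw} : j = 1, …, 2^{n(v−w)}}. Then x ∈ ℓ^{p₁}_q but x ∉ ℓ^{p₂}_q. -/

import Mathlib

open scoped ENNReal BigOperators

/-- Discrete Morrey norm over symmetric index sets `S_{m,N} = {m-N, …, m+N}`. -/
noncomputable def dnorm (p q : ℝ) (x : ℤ → ℝ) : ℝ≥0∞ :=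
  ⨆ (m : ℤ) (N : ℕ), ((2 * N + 1 : ℝ≥0∞) ^ (1 / q - 1 / p)) *
    ENNReal.ofReal ((∑ j ∈ Finset.Icc (m - N) (m + N), |x j| ^ p) ^ (1 / p))

/-- Discrete Morrey norm over arbitrary index intervals `S*_{k,n} = {k, …, k+n}`. -/
noncomputable def dnormStar (p q : ℝ) (x : ℤ → ℝ) : ℝ≥0∞ :=
  ⨆ (k : ℤ) (n : ℕ), ((n + 1 : ℝ≥0∞) ^ (1 / q - 1 / p)) *
    ENNReal.ofReal ((∑ j ∈ Finset.Icc k (k + n), |x j| ^ p) ^ (1 / p))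

/-- Morrey norm on the real line. -/
noncomputable def mnormR (p q : ℝ) (f : ℝ → ℝ) : ℝ≥0∞ :=
  ⨆ (a : ℝ) (r : Set.Ioi (0 : ℝ)),
    ENNReal.ofReal ((2 * r.1) ^ (1 / q - 1 / p) *
      (∫ t in (a - r.1)..(a + r.1), |f t| ^ p) ^ (1 / p))

/-- The step function `x̃(t) = ∑_j x_j χ_{[j,j+1)}(t)`, i.e. `x̃(t) = x ⌊t⌋`. -/
noncomputable def step (x : ℤ → ℝ) : ℝ → ℝ := fun t => x ⌊t⌋

/-- The set `S_n = {1 + 2^v + ⋯ + 2^{(n-1)v} + j·2^{nw} : j = 1, …, 2^{n(v-w)}}`. -/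
def Sn (v w n : ℕ) : Set ℤ :=
  {m | ∃ j : ℕ, 1 ≤ j ∧ j ≤ 2 ^ (n * (v - w)) ∧
    m = ((∑ i ∈ Finset.range n, 2 ^ (i * v) : ℕ) : ℤ) + (j : ℤ) * 2 ^ (n * w)}

/-- The sequence with `x_j = 1` iff `j ∈ {0,1} ∪ ⋃_{n≥1} S_n`, `x_j = 0` otherwise. -/
noncomputable def xseq (v w : ℕ) : ℤ → ℝ :=
  Set.indicator (({0, 1} : Set ℤ) ∪ ⋃ n ∈ Set.Ici 1, Sn v w n) 1

/-- `β_n = 1 + 2^v + ⋯ + 2^{nv}`. -/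
def beta (v n : ℕ) : ℕ := ∑ i ∈ Finset.range (n + 1), 2 ^ (i * v)

namespace S7

open Finset
open scoped Classical

/-- The support set of `xseq`. -/
def A (v w : ℕ) : Set ℤ := ({0, 1} : Set ℤ) ∪ ⋃ n ∈ Set.Ici 1, Sn v w n

/-- Partial sums `B v m = 1 + 2^v + ⋯ + 2^{(m-1)v}` as an integer. -/
def B (v m : ℕ) : ℤ := ((∑ i ∈ Finset.range m, 2 ^ (i * v) : ℕ) : ℤ)

lemma xseq_eq (v w : ℕ) : xseq v w = Set.indicator (A v w) 1 := rfl

lemma mem_Sn {v w m : ℕ} {z : ℤ} :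
    z ∈ Sn v w m ↔ ∃ j : ℕ, 1 ≤ j ∧ j ≤ 2 ^ (m * (v - w)) ∧
      z = B v m + (j : ℤ) * 2 ^ (m * w) := Iff.rfl

lemma B_succ (v m : ℕ) : B v (m + 1) = B v m + 2 ^ (m * v) := by
  simp only [B, Finset.sum_range_succ]
  push_cast
  ring

lemma B_mono (v : ℕ) : Monotone (B v) := by
  intro a b hab
  unfold B
  have : ∑ i ∈ Finset.range a, 2 ^ (i * v) ≤ ∑ i ∈ Finset.range b, 2 ^ (i * v) :=
    Finset.sum_le_sum_of_subset (Finset.range_subset_range.2 hab)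
  exact_mod_cast this

lemma le_B (v m : ℕ) : (m : ℤ) ≤ B v m := by
  unfold B
  have : m ≤ ∑ i ∈ Finset.range m, 2 ^ (i * v) := by
    calc m = ∑ _i ∈ Finset.range m, 1 := by simp
    _ ≤ ∑ i ∈ Finset.range m, 2 ^ (i * v) :=
      Finset.sum_le_sum fun i _ => Nat.one_le_two_pow
  exact_mod_cast this

lemma Sn_sub {v w : ℕ} (hwv : w ≤ v) (m : ℕ) :
    Sn v w m ⊆ Set.Ioc (B v m) (B v m + 2 ^ (m * v)) := by
  rintro z ⟨j, hj1, hj2, rfl⟩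
  have hB : B v m = ((∑ i ∈ Finset.range m, 2 ^ (i * v) : ℕ) : ℤ) := rfl
  constructor
  · have h1 : (0:ℤ) < (j : ℤ) * 2 ^ (m * w) := by positivity
    rw [hB]
    linarith
  · have h2 : (j : ℤ) * 2 ^ (m * w) ≤ 2 ^ (m * v) := by
      have : j * 2 ^ (m * w) ≤ 2 ^ (m * (v - w)) * 2 ^ (m * w) :=
        Nat.mul_le_mul_right _ hj2
      have h3 : 2 ^ (m * (v - w)) * 2 ^ (m * w) = 2 ^ (m * v) := by
        rw [← pow_add, ← Nat.mul_add, Nat.sub_add_cancel hwv]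
      rw [h3] at this
      exact_mod_cast this
    rw [hB]
    linarith

lemma j_eq {v w m j : ℕ} {z : ℤ} (h : z = B v m + (j : ℤ) * 2 ^ (m * w)) :
    (z - B v m).toNat / 2 ^ (m * w) = j := by
  have h1 : z - B v m = ((j * 2 ^ (m * w) : ℕ) : ℤ) := by rw [h]; push_cast; ring
  rw [h1, Int.toNat_natCast, Nat.mul_div_cancel _ (pow_pos two_pos _)]

lemma card1 (v w : ℕ) (s : Finset ℤ) (m : ℕ) :
    (s.filter (· ∈ Sn v w m)).card ≤ 2 ^ (m * (v - w)) := by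
  have h := Finset.card_le_card_of_injOn
    (f := fun z => (z - B v m).toNat / 2 ^ (m * w))
    (s := s.filter (· ∈ Sn v w m)) (t := Finset.Icc 1 (2 ^ (m * (v - w))))
    (fun z hz => by
      obtain ⟨j, hj1, hj2, hj3⟩ := (Finset.mem_filter.1 hz).2
      dsimp only
      rw [j_eq hj3]
      exact Finset.mem_Icc.2 ⟨hj1, hj2⟩)
    (fun z hz z' hz' hff => by
      obtain ⟨j, hj1, hj2, hj3⟩ := (Finset.mem_filter.1 hz).2
      obtain ⟨j', hj1', hj2', hj3'⟩ := (Finset.mem_filter.1 hz').2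
      simp only [j_eq hj3, j_eq hj3'] at hff
      rw [hj3, hj3', hff])
  simpa using h

lemma card2 (v w : ℕ) (k : ℤ) (n m : ℕ) :
    ((Finset.Icc k (k + (n:ℤ))).filter (· ∈ Sn v w m)).card ≤ n / 2 ^ (m * w) + 1 := by
  have hd : 0 < 2 ^ (m * w) := pow_pos two_pos _
  -- auxiliary: ordered injectivity
  have aux : ∀ z ∈ (Finset.Icc k (k + (n:ℤ))).filter (· ∈ Sn v w m),
      ∀ z' ∈ (Finset.Icc k (k + (n:ℤ))).filter (· ∈ Sn v w m), z ≤ z' →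
      (z - k).toNat / 2 ^ (m * w) = (z' - k).toNat / 2 ^ (m * w) → z = z' := by
    intro z hz z' hz' hle hff
    obtain ⟨hzI, j, hj1, hj2, hj3⟩ := Finset.mem_filter.1 hz |>.imp id fun h => h
    obtain ⟨hzI', j', hj1', hj2', hj3'⟩ := Finset.mem_filter.1 hz' |>.imp id fun h => h
    have hk : k ≤ z := (Finset.mem_Icc.1 hzI).1
    have hjj : j ≤ j' := by
      have : (j : ℤ) * 2 ^ (m * w) ≤ (j' : ℤ) * 2 ^ (m * w) := by
        rw [hj3, hj3'] at hle; linarith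
      have h2 : (j : ℤ) ≤ j' := le_of_mul_le_mul_right this (by positivity)
      exact_mod_cast h2
    have hrep : z' - k = (((z - k).toNat + (j' - j) * 2 ^ (m * w) : ℕ) : ℤ) := by
      push_cast [Nat.cast_sub hjj]
      rw [Int.toNat_of_nonneg (by linarith : (0:ℤ) ≤ z - k)]
      rw [hj3, hj3']
      ring
    have hdiv : (z' - k).toNat / 2 ^ (m * w)
        = (z - k).toNat / 2 ^ (m * w) + (j' - j) := by
      rw [hrep, Int.toNat_natCast, Nat.add_mul_div_right _ _ hd]
    rw [hdiv] at hff
    have : j' - j = 0 := by omega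
    have hj'j : j = j' := by omega
    rw [hj3, hj3', hj'j]
  have h := Finset.card_le_card_of_injOn
    (f := fun z => (z - k).toNat / 2 ^ (m * w))
    (s := (Finset.Icc k (k + (n:ℤ))).filter (· ∈ Sn v w m))
    (t := Finset.range (n / 2 ^ (m * w) + 1))
    (fun z hz => by
      have hzI := (Finset.mem_filter.1 hz).1
      rw [Finset.mem_Icc] at hzI
      have h1 : (z - k).toNat ≤ n := by
        rw [Int.toNat_le]; push_cast; linarith [hzI.2]
      exact Finset.mem_range.2 (Nat.lt_succ_of_le (Nat.div_le_div_right h1))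
    )
    (fun z hz z' hz' hff => by
      rcases le_total z z' with h | h
      · exact aux z hz z' hz' h hff
      · exact (aux z' hz' z hz h hff.symm).symm)
  simpa using h

lemma gap (v w : ℕ) (hwv : w ≤ v) {m m' : ℕ} (hmm : m + 2 ≤ m') {k : ℤ} {n : ℕ}
    {z z' : ℤ} (hz : z ∈ Sn v w m) (hz' : z' ∈ Sn v w m')
    (hzI : z ∈ Finset.Icc k (k + (n:ℤ))) (hz'I : z' ∈ Finset.Icc k (k + (n:ℤ))) :
    2 ^ ((m + 1) * v) ≤ n := by
  have h1 : z ≤ B v m + 2 ^ (m * v) := (Sn_sub hwv m hz).2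
  have h1' : z ≤ B v (m + 1) := by rw [B_succ]; exact h1
  have h2 : B v m' < z' := (Sn_sub hwv m' hz').1
  have h3 : B v (m + 2) ≤ B v m' := B_mono v hmm
  have h4 : B v (m + 2) = B v (m + 1) + 2 ^ ((m + 1) * v) := B_succ v (m + 1)
  have h5 := Finset.mem_Icc.1 hzI
  have h6 := Finset.mem_Icc.1 hz'I
  have : (2:ℤ) ^ ((m + 1) * v) ≤ n := by
    have := h5.1; have := h6.2; linarith
  exact_mod_cast this

lemma geom (r : ℕ) (hr : 2 ≤ r) : ∀ K, ∑ m ∈ Finset.range K, r ^ m ≤ r ^ K := by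
  intro K
  induction K with
  | zero => simp
  | succ K ih =>
    rw [Finset.sum_range_succ, pow_succ]
    have h2 : r ^ K + r ^ K ≤ r ^ K * r := by
      calc r ^ K + r ^ K = r ^ K * 2 := by ring
      _ ≤ r ^ K * r := Nat.mul_le_mul_left _ hr
    calc ∑ m ∈ Finset.range K, r ^ m + r ^ K ≤ r ^ K + r ^ K := by omega
    _ ≤ r ^ K * r := h2

lemma sum_eq (v w : ℕ) (p : ℝ) (hp : p ≠ 0) (k : ℤ) (n : ℕ) :
    ∑ j ∈ Finset.Icc k (k + (n:ℤ)), |xseq v w j| ^ p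
      = (((Finset.Icc k (k + (n:ℤ))).filter (· ∈ A v w)).card : ℝ) := by
  rw [← Finset.sum_boole]
  refine Finset.sum_congr rfl fun j _ => ?_
  by_cases h : j ∈ A v w
  · rw [xseq_eq, Set.indicator_of_mem h]
    simp [h, Real.one_rpow]
  · rw [xseq_eq, Set.indicator_of_notMem h]
    simp [h, Real.zero_rpow hp, abs_zero]

lemma count_le (v w : ℕ) (hw : 0 < w) (hwv : w < v) (k : ℤ) (n : ℕ) :
    (((Finset.Icc k (k + (n:ℤ))).filter (· ∈ A v w)).card : ℝ)
      ≤ ((2:ℝ) ^ (v - w) + 6) * ((n : ℝ) + 1) ^ (1 - (w : ℝ) / v) := by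
  have hv : 0 < v := (Nat.zero_le w).trans_lt hwv
  have hvR : (0:ℝ) < v := by exact_mod_cast hv
  have hwR : (0:ℝ) < w := by exact_mod_cast hw
  have hwvR : (w:ℝ) < v := by exact_mod_cast hwv
  set θ : ℝ := 1 - (w:ℝ)/v with hθdef
  have hθ0 : 0 ≤ θ := by
    have : (w:ℝ)/v ≤ 1 := by rw [div_le_one hvR]; linarith
    rw [hθdef]; linarith
  have hn1 : (1:ℝ) ≤ (n:ℝ) + 1 := by
    have h0 : (0:ℝ) ≤ (n:ℝ) := by positivity
    linarith
  have hone : (1:ℝ) ≤ ((n:ℝ)+1) ^ θ := by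
    calc (1:ℝ) = (1:ℝ) ^ θ := (Real.one_rpow θ).symm
    _ ≤ ((n:ℝ)+1) ^ θ := Real.rpow_le_rpow zero_le_one hn1 hθ0
  set I := Finset.Icc k (k + (n:ℤ)) with hI
  set M := (k + (n:ℤ)).toNat with hM
  have hsub : I.filter (· ∈ A v w) ⊆
      (I.filter (fun z => z = 0 ∨ z = 1)) ∪
        (Finset.Icc 1 M).biUnion (fun m => I.filter (· ∈ Sn v w m)) := by
    intro z hz
    rw [Finset.mem_filter] at hz
    obtain ⟨hzI, hzA⟩ := hz
    simp only [A, Set.mem_union, Set.mem_insert_iff, Set.mem_singleton_iff] at hzA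
    rcases hzA with h01 | hU
    · exact Finset.mem_union_left _ (Finset.mem_filter.2 ⟨hzI, h01⟩)
    · simp only [Set.mem_iUnion, Set.mem_Ici, exists_prop] at hU
      obtain ⟨m, hm1, hmz⟩ := hU
      have hzle : z ≤ k + (n:ℤ) := (Finset.mem_Icc.1 hzI).2
      have hBz : B v m < z := (Sn_sub hwv.le m hmz).1
      have hmz' : (m:ℤ) < z := lt_of_le_of_lt (le_B v m) hBz
      have h0kn : (0:ℤ) ≤ k + (n:ℤ) := by
        have : (0:ℤ) ≤ (m:ℤ) := Int.natCast_nonneg m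
        linarith
      have hmM : m ≤ M := by
        have h7 : (m:ℤ) ≤ ((k + (n:ℤ)).toNat : ℤ) := by
          rw [Int.toNat_of_nonneg h0kn]; linarith
        rw [hM]
        exact_mod_cast h7
      exact Finset.mem_union_right _ (Finset.mem_biUnion.2
        ⟨m, Finset.mem_Icc.2 ⟨hm1, hmM⟩, Finset.mem_filter.2 ⟨hzI, hmz⟩⟩)
  have hcard2 : (I.filter (fun z => z = 0 ∨ z = 1)).card ≤ 2 := by
    have hsub2 : I.filter (fun z => z = 0 ∨ z = 1) ⊆ ({0, 1} : Finset ℤ) := by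
      intro z hz
      rcases (Finset.mem_filter.1 hz).2 with h | h <;> simp [h]
    exact (Finset.card_le_card hsub2).trans (by norm_num)
  have hcard : ((I.filter (· ∈ A v w)).card : ℝ)
      ≤ 2 + ∑ m ∈ Finset.Icc 1 M, ((I.filter (· ∈ Sn v w m)).card : ℝ) := by
    have h1 : (I.filter (· ∈ A v w)).card
        ≤ 2 + ∑ m ∈ Finset.Icc 1 M, (I.filter (· ∈ Sn v w m)).card := by
      calc (I.filter (· ∈ A v w)).card
          ≤ ((I.filter (fun z => z = 0 ∨ z = 1)) ∪
              (Finset.Icc 1 M).biUnion (fun m => I.filter (· ∈ Sn v w m))).card :=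
            Finset.card_le_card hsub
        _ ≤ (I.filter (fun z => z = 0 ∨ z = 1)).card
            + ((Finset.Icc 1 M).biUnion (fun m => I.filter (· ∈ Sn v w m))).card :=
            Finset.card_union_le _ _
        _ ≤ 2 + ∑ m ∈ Finset.Icc 1 M, (I.filter (· ∈ Sn v w m)).card :=
            add_le_add hcard2 Finset.card_biUnion_le
    calc ((I.filter (· ∈ A v w)).card : ℝ)
        ≤ ((2 + ∑ m ∈ Finset.Icc 1 M, (I.filter (· ∈ Sn v w m)).card : ℕ) : ℝ) := by
          exact_mod_cast h1
      _ = 2 + ∑ m ∈ Finset.Icc 1 M, ((I.filter (· ∈ Sn v w m)).card : ℝ) := by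
          push_cast; ring
  set s₁ := (Finset.Icc 1 M).filter (fun m => 2 ^ (m * v) ≤ n) with hs₁
  set s₂ := (Finset.Icc 1 M).filter (fun m => ¬ 2 ^ (m * v) ≤ n) with hs₂
  have hsplit : ∑ m ∈ Finset.Icc 1 M, ((I.filter (· ∈ Sn v w m)).card : ℝ)
      = ∑ m ∈ s₁, ((I.filter (· ∈ Sn v w m)).card : ℝ)
        + ∑ m ∈ s₂, ((I.filter (· ∈ Sn v w m)).card : ℝ) :=
    (Finset.sum_filter_add_sum_filter_not _ _ _).symm
  have hb1 : ∑ m ∈ s₁, ((I.filter (· ∈ Sn v w m)).card : ℝ)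
      ≤ (2:ℝ) ^ (v - w) * ((n:ℝ)+1) ^ θ := by
    rcases s₁.eq_empty_or_nonempty with he | hne
    · rw [he, Finset.sum_empty]; positivity
    · set M₀ := s₁.max' hne with hM₀
      have hM₀n : 2 ^ (M₀ * v) ≤ n := (Finset.mem_filter.1 (s₁.max'_mem hne)).2
      have h1 : ∑ m ∈ s₁, (I.filter (· ∈ Sn v w m)).card
          ≤ ∑ m ∈ Finset.range (M₀ + 1), 2 ^ (m * (v - w)) := by
        calc ∑ m ∈ s₁, (I.filter (· ∈ Sn v w m)).card
            ≤ ∑ m ∈ s₁, 2 ^ (m * (v - w)) :=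
              Finset.sum_le_sum fun m _ => card1 v w I m
          _ ≤ ∑ m ∈ Finset.range (M₀ + 1), 2 ^ (m * (v - w)) := by
              apply Finset.sum_le_sum_of_subset
              intro m hm
              rw [Finset.mem_range, Nat.lt_succ_iff]
              exact s₁.le_max' m hm
      have h2 : ∑ m ∈ Finset.range (M₀ + 1), 2 ^ (m * (v - w)) ≤ 2 ^ ((M₀ + 1) * (v - w)) := by
        have hgeom := geom (2 ^ (v - w)) (by
          calc 2 = 2 ^ 1 := (pow_one 2).symm
          _ ≤ 2 ^ (v - w) := Nat.pow_le_pow_right (by norm_num) (by omega)) (M₀ + 1)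
        calc ∑ m ∈ Finset.range (M₀ + 1), 2 ^ (m * (v - w))
            = ∑ m ∈ Finset.range (M₀ + 1), (2 ^ (v - w)) ^ m := by
              refine Finset.sum_congr rfl fun m _ => ?_
              rw [← pow_mul, Nat.mul_comm]
          _ ≤ (2 ^ (v - w)) ^ (M₀ + 1) := hgeom
          _ = 2 ^ ((M₀ + 1) * (v - w)) := by rw [← pow_mul, Nat.mul_comm]
      have h3 : ((2:ℝ)) ^ (M₀ * (v - w)) ≤ ((n:ℝ)) ^ θ := by
        have h3a : ((2:ℝ)) ^ (M₀ * v) ≤ (n:ℝ) := by exact_mod_cast hM₀n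
        have hrw : ((2:ℝ)) ^ (M₀ * (v - w)) = (((2:ℝ)) ^ (M₀ * v)) ^ θ := by
          rw [← Real.rpow_natCast 2 (M₀ * (v - w)), ← Real.rpow_natCast 2 (M₀ * v),
            ← Real.rpow_mul (by norm_num)]
          congr 1
          rw [hθdef]
          push_cast [Nat.cast_sub hwv.le]
          field_simp
        rw [hrw]
        exact Real.rpow_le_rpow (by positivity) h3a hθ0
      have h4 : ((n:ℝ)) ^ θ ≤ ((n:ℝ) + 1) ^ θ :=
        Real.rpow_le_rpow (Nat.cast_nonneg n) (by linarith) hθ0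
      calc ∑ m ∈ s₁, ((I.filter (· ∈ Sn v w m)).card : ℝ)
          = ((∑ m ∈ s₁, (I.filter (· ∈ Sn v w m)).card : ℕ) : ℝ) := by push_cast; ring
        _ ≤ ((2 ^ ((M₀ + 1) * (v - w)) : ℕ) : ℝ) := by exact_mod_cast h1.trans h2
        _ = (2:ℝ) ^ (v - w) * (2:ℝ) ^ (M₀ * (v - w)) := by
            push_cast
            rw [← pow_add]
            congr 1
            ring
        _ ≤ (2:ℝ) ^ (v - w) * ((n:ℝ)+1) ^ θ :=
            mul_le_mul_of_nonneg_left (h3.trans h4) (by positivity)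
  have hb2 : ∑ m ∈ s₂, ((I.filter (· ∈ Sn v w m)).card : ℝ) ≤ 4 * ((n:ℝ)+1) ^ θ := by
    set t := s₂.filter (fun m => (I.filter (· ∈ Sn v w m)).card ≠ 0) with ht
    have hsum : ∑ m ∈ s₂, ((I.filter (· ∈ Sn v w m)).card : ℝ)
        = ∑ m ∈ t, ((I.filter (· ∈ Sn v w m)).card : ℝ) := by
      rw [ht]
      exact (Finset.sum_filter_of_ne fun m _ h => Nat.cast_ne_zero.mp h).symm
    rw [hsum]
    rcases t.eq_empty_or_nonempty with he | hne
    · rw [he, Finset.sum_empty]; positivity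
    · set m₁ := t.min' hne with hm₁
      have hm₁t : m₁ ∈ t := t.min'_mem hne
      have hm₁s₂ : ¬ 2 ^ (m₁ * v) ≤ n :=
        (Finset.mem_filter.1 (Finset.filter_subset _ _ hm₁t)).2
      have hsub2 : t ⊆ {m₁, m₁ + 1} := by
        intro m hm
        by_contra hmem
        have h2 : m₁ + 2 ≤ m := by
          have h1 : m₁ ≤ m := t.min'_le m hm
          simp only [Finset.mem_insert, Finset.mem_singleton] at hmem
          omega
        have hc₁ : (I.filter (· ∈ Sn v w m₁)).card ≠ 0 := (Finset.mem_filter.1 hm₁t).2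
        have hcm : (I.filter (· ∈ Sn v w m)).card ≠ 0 := (Finset.mem_filter.1 hm).2
        obtain ⟨z, hz⟩ := Finset.card_pos.mp (Nat.pos_of_ne_zero hc₁)
        obtain ⟨z', hz'⟩ := Finset.card_pos.mp (Nat.pos_of_ne_zero hcm)
        have hzI := (Finset.mem_filter.1 hz).1
        have hzS := (Finset.mem_filter.1 hz).2
        have hz'I := (Finset.mem_filter.1 hz').1
        have hz'S := (Finset.mem_filter.1 hz').2
        have hgap := gap v w hwv.le h2 hzS hz'S hzI hz'I
        have hmono : 2 ^ (m₁ * v) ≤ 2 ^ ((m₁ + 1) * v) :=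
          Nat.pow_le_pow_right (by norm_num) (Nat.mul_le_mul_right v (Nat.le_succ m₁))
        omega
      have htcard : t.card ≤ 2 :=
        (Finset.card_le_card hsub2).trans ((Finset.card_insert_le _ _).trans (by simp))
      have hterm : ∀ m ∈ t, ((I.filter (· ∈ Sn v w m)).card : ℝ) ≤ ((n:ℝ)+1) ^ θ + 1 := by
        intro m hm
        have hms₂ : ¬ 2 ^ (m * v) ≤ n :=
          (Finset.mem_filter.1 (Finset.filter_subset _ _ hm)).2
        have h5 : ((I.filter (· ∈ Sn v w m)).card : ℝ) ≤ (n:ℝ) / 2 ^ (m * w) + 1 := by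
          have hc2 := card2 v w k n m
          calc ((I.filter (· ∈ Sn v w m)).card : ℝ)
              ≤ ((n / 2 ^ (m * w) + 1 : ℕ) : ℝ) := by rw [hI]; exact_mod_cast hc2
            _ ≤ (n:ℝ) / 2 ^ (m * w) + 1 := by
                have hdc := Nat.cast_div_le (α := ℝ) (m := n) (n := 2 ^ (m * w))
                push_cast at hdc ⊢
                linarith
        have h6 : ((n:ℝ) + 1) ≤ (2:ℝ) ^ (m * v) := by
          have h6a : n + 1 ≤ 2 ^ (m * v) := Nat.lt_of_not_le hms₂
          exact_mod_cast h6a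
        have h7 : ((n:ℝ)+1) ^ ((w:ℝ)/v) ≤ (2:ℝ) ^ (m * w) := by
          have hrw : ((2:ℝ)) ^ (m * w) = (((2:ℝ)) ^ (m * v)) ^ ((w:ℝ)/v) := by
            rw [← Real.rpow_natCast 2 (m * w), ← Real.rpow_natCast 2 (m * v),
              ← Real.rpow_mul (by norm_num)]
            congr 1
            push_cast
            field_simp
          rw [hrw]
          exact Real.rpow_le_rpow (by positivity) h6 (by positivity)
        have h8 : (n:ℝ) / 2 ^ (m * w) ≤ ((n:ℝ)+1) / ((n:ℝ)+1) ^ ((w:ℝ)/v) :=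
          div_le_div₀ (by positivity) (by linarith) (by positivity) h7
        have h9 : ((n:ℝ)+1) / ((n:ℝ)+1) ^ ((w:ℝ)/v) = ((n:ℝ)+1) ^ θ := by
          rw [hθdef, Real.rpow_sub (by positivity), Real.rpow_one]
        rw [h9] at h8
        linarith
      calc ∑ m ∈ t, ((I.filter (· ∈ Sn v w m)).card : ℝ)
          ≤ t.card • (((n:ℝ)+1) ^ θ + 1) := Finset.sum_le_card_nsmul t _ _ hterm
        _ = (t.card : ℝ) * (((n:ℝ)+1) ^ θ + 1) := by rw [nsmul_eq_mul]
        _ ≤ 2 * (((n:ℝ)+1) ^ θ + 1) := by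
            have h10 : (t.card : ℝ) ≤ 2 := by exact_mod_cast htcard
            nlinarith [hone]
        _ ≤ 4 * ((n:ℝ)+1) ^ θ := by nlinarith [hone]
  have h2pos : (0:ℝ) ≤ (2:ℝ) ^ (v - w) := by positivity
  rw [hsplit] at hcard
  nlinarith [hone, h2pos, hb1, hb2, hcard]

lemma card_ge (v w : ℕ) (hwv : w ≤ v) (n : ℕ) (hn : 1 ≤ n) :
    2 ^ (n * (v - w)) ≤
      ((Finset.Icc (B v n + 2 ^ (n * w))
        (B v n + 2 ^ (n * w) + ((2 ^ (n * v) - 2 ^ (n * w) : ℕ) : ℤ))).filter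
          (· ∈ A v w)).card := by
  have hd : (0:ℤ) < 2 ^ (n * w) := by positivity
  have hpow : (2:ℕ) ^ (n * w) ≤ 2 ^ (n * v) :=
    Nat.pow_le_pow_right (by norm_num) (Nat.mul_le_mul_left _ hwv)
  have hcast : ((2 ^ (n * v) - 2 ^ (n * w) : ℕ) : ℤ) = 2 ^ (n * v) - 2 ^ (n * w) := by
    push_cast [Nat.cast_sub hpow]; ring
  have h := Finset.card_le_card_of_injOn
    (f := fun j : ℕ => B v n + (j : ℤ) * 2 ^ (n * w))
    (s := Finset.Icc 1 (2 ^ (n * (v - w))))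
    (t := (Finset.Icc (B v n + 2 ^ (n * w))
        (B v n + 2 ^ (n * w) + ((2 ^ (n * v) - 2 ^ (n * w) : ℕ) : ℤ))).filter
          (· ∈ A v w))
    (fun j hj => by
      rw [Finset.mem_coe, Finset.mem_Icc] at hj; rw [Finset.mem_coe]
      refine Finset.mem_filter.2 ⟨?_, ?_⟩
      · dsimp only
        rw [Finset.mem_Icc, hcast]
        constructor
        · have : (1:ℤ) ≤ (j:ℤ) := by exact_mod_cast hj.1
          nlinarith
        · have hjle : (j:ℤ) * 2 ^ (n * w) ≤ 2 ^ (n * v) := by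
            have h1 : j * 2 ^ (n * w) ≤ 2 ^ (n * (v - w)) * 2 ^ (n * w) :=
              Nat.mul_le_mul_right _ hj.2
            have h2 : 2 ^ (n * (v - w)) * 2 ^ (n * w) = 2 ^ (n * v) := by
              rw [← pow_add, ← Nat.mul_add, Nat.sub_add_cancel hwv]
            rw [h2] at h1
            exact_mod_cast h1
          linarith
      · exact Or.inr (Set.mem_biUnion hn ⟨j, hj.1, hj.2, rfl⟩))
    (fun j hj j' hj' hff => by
      have h1 : (j:ℤ) * 2 ^ (n * w) = (j':ℤ) * 2 ^ (n * w) := by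
        have := hff; dsimp at this; linarith [this]
      have h2 : (j:ℤ) = j' := mul_right_cancel₀ (by positivity) h1
      exact_mod_cast h2)
  simpa using h

end S7

theorem stmt7 (p₁ p₂ q : ℝ) (hp₁ : 1 ≤ p₁) (h12 : p₁ < p₂) (h2q : p₂ < q)
    (v w : ℕ) (hw : 0 < w)
    (h₁ : q / p₂ < (v : ℝ) / w) (h₂ : (v : ℝ) / w < q / p₁) :
    dnormStar p₁ q (xseq v w) ≠ ⊤ ∧ dnormStar p₂ q (xseq v w) = ⊤ := by
  classical
  have hp₁0 : (0:ℝ) < p₁ := lt_of_lt_of_le one_pos hp₁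
  have hp₂0 : (0:ℝ) < p₂ := hp₁0.trans h12
  have hq0 : (0:ℝ) < q := hp₂0.trans h2q
  have hw0 : (0:ℝ) < w := by exact_mod_cast hw
  have hqp₂ : (1:ℝ) < q / p₂ := (one_lt_div hp₂0).2 h2q
  have hvw1 : (1:ℝ) < (v:ℝ)/w := hqp₂.trans h₁
  have hwvR : (w:ℝ) < v := by
    have := (one_lt_div hw0).1 hvw1; linarith
  have hwv : w < v := by exact_mod_cast hwvR
  have hv0 : 0 < v := lt_of_le_of_lt (Nat.zero_le w) hwv
  have hv0R : (0:ℝ) < v := by exact_mod_cast hv0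
  constructor
  · -- finiteness for p₁
    set θ : ℝ := 1 - (w:ℝ)/v with hθdef
    set C : ℝ := (2:ℝ) ^ (v - w) + 6 with hC
    have hC0 : (0:ℝ) < C := by rw [hC]; positivity
    have hexp : 1/q - 1/p₁ + θ/p₁ ≤ 0 := by
      have hcross : (v:ℝ) * p₁ < q * w := by
        rw [div_lt_div_iff₀ hw0 hp₁0] at h₂; linarith
      have heq : 1/q - 1/p₁ + θ/p₁ = ((v:ℝ)*p₁ - q*w)/(q*p₁*v) := by
        rw [hθdef]; field_simp; ring
      rw [heq]
      apply div_nonpos_of_nonpos_of_nonneg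
      · linarith
      · positivity
    refine ne_top_of_le_ne_top (ENNReal.ofReal_ne_top (r := C ^ (1/p₁))) ?_
    simp only [dnormStar]
    refine iSup_le fun k => iSup_le fun n => ?_
    have hn1 : (1:ℝ) ≤ (n:ℝ) + 1 := by
      have h0 : (0:ℝ) ≤ (n:ℝ) := by positivity
      linarith
    have hsum := S7.sum_eq v w p₁ (ne_of_gt hp₁0) k n
    have hcount := S7.count_le v w hw hwv k n
    have hS0 : (0:ℝ) ≤ ∑ j ∈ Finset.Icc k (k + (n:ℤ)), |xseq v w j| ^ p₁ := by
      rw [hsum]; positivity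
    have hSle : (∑ j ∈ Finset.Icc k (k + (n:ℤ)), |xseq v w j| ^ p₁)
        ≤ C * ((n:ℝ)+1) ^ θ := by
      rw [hsum, hC, hθdef]; exact hcount
    have h1 : (∑ j ∈ Finset.Icc k (k + (n:ℤ)), |xseq v w j| ^ p₁) ^ (1/p₁)
        ≤ C ^ (1/p₁) * ((n:ℝ)+1) ^ (θ/p₁) := by
      have h1a := Real.rpow_le_rpow hS0 hSle (le_of_lt (one_div_pos.mpr hp₁0))
      rwa [Real.mul_rpow hC0.le (by positivity),
        ← Real.rpow_mul (by positivity : (0:ℝ) ≤ (n:ℝ)+1), mul_one_div] at h1a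
    have hb : ((n : ℝ≥0∞) + 1) = ENNReal.ofReal ((n:ℝ) + 1) := by
      rw [ENNReal.ofReal_add (Nat.cast_nonneg n) zero_le_one, ENNReal.ofReal_natCast,
        ENNReal.ofReal_one]
    have hbase : ((n : ℝ≥0∞) + 1) ^ (1/q - 1/p₁)
        = ENNReal.ofReal (((n:ℝ)+1) ^ (1/q - 1/p₁)) := by
      rw [hb, ENNReal.ofReal_rpow_of_pos (by positivity)]
    rw [hbase, ← ENNReal.ofReal_mul (by positivity)]
    apply ENNReal.ofReal_le_ofReal
    calc ((n:ℝ)+1) ^ (1/q - 1/p₁)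
          * (∑ j ∈ Finset.Icc k (k + (n:ℤ)), |xseq v w j| ^ p₁) ^ (1/p₁)
        ≤ ((n:ℝ)+1) ^ (1/q - 1/p₁) * (C ^ (1/p₁) * ((n:ℝ)+1) ^ (θ/p₁)) :=
          mul_le_mul_of_nonneg_left h1 (by positivity)
      _ = C ^ (1/p₁) * (((n:ℝ)+1) ^ (1/q - 1/p₁) * ((n:ℝ)+1) ^ (θ/p₁)) := by ring
      _ = C ^ (1/p₁) * ((n:ℝ)+1) ^ (1/q - 1/p₁ + θ/p₁) := by
          rw [← Real.rpow_add (by positivity : (0:ℝ) < (n:ℝ)+1)]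
      _ ≤ C ^ (1/p₁) * 1 :=
          mul_le_mul_of_nonneg_left
            (Real.rpow_le_one_of_one_le_of_nonpos hn1 hexp) (Real.rpow_nonneg hC0.le _)
      _ = C ^ (1/p₁) := mul_one _
  · -- infiniteness for p₂
    have hp2ne : p₂ ≠ 0 := ne_of_gt hp₂0
    set cc : ℝ := (v:ℝ)/q - (w:ℝ)/p₂ with hccdef
    have hcc0 : 0 < cc := by
      have hcross : q * (w:ℝ) < (v:ℝ) * p₂ := by
        rw [div_lt_div_iff₀ hp₂0 hw0] at h₁; linarith
      have hceq : cc = ((v:ℝ)*p₂ - q*w)/(q*p₂) := by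
        rw [hccdef]; field_simp; try ring
      rw [hceq]
      apply div_pos (by linarith) (by positivity)
    have hone_lt : (1:ℝ) < (2:ℝ) ^ cc := by
      calc (1:ℝ) = (2:ℝ) ^ (0:ℝ) := (Real.rpow_zero 2).symm
        _ < (2:ℝ) ^ cc := Real.rpow_lt_rpow_of_exponent_lt one_lt_two hcc0
    have key : ∀ n : ℕ, 1 ≤ n →
        ENNReal.ofReal (((2:ℝ) ^ cc) ^ n) ≤ dnormStar p₂ q (xseq v w) := by
      intro n hn
      set NN : ℕ := 2 ^ (n * v) - 2 ^ (n * w) with hNN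
      set kk : ℤ := S7.B v n + 2 ^ (n * w) with hkk
      have hpow : (2:ℕ) ^ (n * w) ≤ 2 ^ (n * v) :=
        Nat.pow_le_pow_right (by norm_num) (Nat.mul_le_mul_left _ hwv.le)
      have hpow1 : (1:ℕ) ≤ 2 ^ (n * w) := Nat.one_le_two_pow
      have hcard := S7.card_ge v w hwv.le n hn
      have hsum := S7.sum_eq v w p₂ hp2ne kk NN
      have hNN1 : NN + 1 ≤ 2 ^ (n * v) := by rw [hNN]; omega
      have hSge : ((2:ℝ) ^ (n * (v - w)) : ℝ)
          ≤ ∑ j ∈ Finset.Icc kk (kk + (NN:ℤ)), |xseq v w j| ^ p₂ := by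
        rw [hsum, hkk, hNN]
        exact_mod_cast hcard
      have h2le : ENNReal.ofReal (((2:ℝ) ^ (n * (v - w))) ^ (1/p₂))
          ≤ ENNReal.ofReal
            ((∑ j ∈ Finset.Icc kk (kk + (NN:ℤ)), |xseq v w j| ^ p₂) ^ (1/p₂)) :=
        ENNReal.ofReal_le_ofReal
          (Real.rpow_le_rpow (by positivity) hSge (le_of_lt (one_div_pos.mpr hp₂0)))
      have hbne : ((NN : ℝ≥0∞) + 1) = ENNReal.ofReal ((NN:ℝ) + 1) := by
        rw [ENNReal.ofReal_add (Nat.cast_nonneg NN) zero_le_one, ENNReal.ofReal_natCast,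
          ENNReal.ofReal_one]
      have hexp2 : 1/q - 1/p₂ ≤ 0 := by
        have h11 : 1/q ≤ 1/p₂ := one_div_le_one_div_of_le hp₂0 h2q.le
        linarith
      have hbase : ENNReal.ofReal (((2:ℝ) ^ (n * v)) ^ (1/q - 1/p₂))
          ≤ ((NN : ℝ≥0∞) + 1) ^ (1/q - 1/p₂) := by
        rw [hbne, ENNReal.ofReal_rpow_of_pos (by positivity)]
        apply ENNReal.ofReal_le_ofReal
        have hxy : ((NN:ℝ) + 1) ≤ (2:ℝ) ^ (n * v) := by exact_mod_cast hNN1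
        have hx : (0:ℝ) < (NN:ℝ) + 1 := by positivity
        rw [show (1/q - 1/p₂ : ℝ) = -(-(1/q - 1/p₂)) by ring,
          Real.rpow_neg (by positivity), Real.rpow_neg hx.le]
        exact inv_anti₀ (Real.rpow_pos_of_pos hx _)
          (Real.rpow_le_rpow hx.le hxy (by linarith))
      have hprod : ((2:ℝ) ^ (n * v)) ^ (1/q - 1/p₂) * ((2:ℝ) ^ (n * (v - w))) ^ (1/p₂)
          = ((2:ℝ) ^ cc) ^ n := by
        rw [← Real.rpow_natCast 2 (n * v), ← Real.rpow_natCast 2 (n * (v - w)),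
          ← Real.rpow_natCast ((2:ℝ) ^ cc) n,
          ← Real.rpow_mul (by norm_num : (0:ℝ) ≤ 2),
          ← Real.rpow_mul (by norm_num : (0:ℝ) ≤ 2),
          ← Real.rpow_add (by norm_num : (0:ℝ) < 2),
          show ((2:ℝ) ^ cc) ^ ((n:ℕ):ℝ) = (2:ℝ) ^ (cc * ((n:ℕ):ℝ)) from
            (Real.rpow_mul (by norm_num) cc ((n:ℕ):ℝ)).symm]
        congr 1
        rw [hccdef]
        push_cast [Nat.cast_sub hwv.le]
        field_simp
        ring
      calc ENNReal.ofReal (((2:ℝ) ^ cc) ^ n)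
          = ENNReal.ofReal (((2:ℝ) ^ (n * v)) ^ (1/q - 1/p₂)
              * ((2:ℝ) ^ (n * (v - w))) ^ (1/p₂)) := by rw [hprod]
        _ = ENNReal.ofReal (((2:ℝ) ^ (n * v)) ^ (1/q - 1/p₂))
            * ENNReal.ofReal (((2:ℝ) ^ (n * (v - w))) ^ (1/p₂)) :=
            ENNReal.ofReal_mul (by positivity)
        _ ≤ ((NN : ℝ≥0∞) + 1) ^ (1/q - 1/p₂)
            * ENNReal.ofReal
              ((∑ j ∈ Finset.Icc kk (kk + (NN:ℤ)), |xseq v w j| ^ p₂) ^ (1/p₂)) :=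
            mul_le_mul' hbase h2le
        _ ≤ ⨆ m : ℕ, ((m + 1 : ℝ≥0∞) ^ (1 / q - 1 / p₂)) *
              ENNReal.ofReal
                ((∑ j ∈ Finset.Icc kk (kk + (m:ℤ)), |xseq v w j| ^ p₂) ^ (1 / p₂)) :=
            le_iSup (fun m : ℕ => ((m + 1 : ℝ≥0∞) ^ (1 / q - 1 / p₂)) *
              ENNReal.ofReal
                ((∑ j ∈ Finset.Icc kk (kk + (m:ℤ)), |xseq v w j| ^ p₂) ^ (1 / p₂))) NN
        _ ≤ dnormStar p₂ q (xseq v w) := by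
            simp only [dnormStar]
            exact le_iSup (fun k : ℤ => ⨆ m : ℕ, ((m + 1 : ℝ≥0∞) ^ (1 / q - 1 / p₂)) *
              ENNReal.ofReal
                ((∑ j ∈ Finset.Icc k (k + (m:ℤ)), |xseq v w j| ^ p₂) ^ (1 / p₂))) kk
    by_contra hne
    have hD : ∀ n : ℕ, ((2:ℝ) ^ cc) ^ (n + 1) ≤ (dnormStar p₂ q (xseq v w)).toReal :=
      fun n => (ENNReal.ofReal_le_iff_le_toReal hne).1 (key (n + 1) (Nat.le_add_left 1 n))
    obtain ⟨n, hn⟩ := pow_unbounded_of_one_lt ((dnormStar p₂ q (xseq v w)).toReal) hone_lt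
    have h1 : ((2:ℝ) ^ cc) ^ n ≤ ((2:ℝ) ^ cc) ^ (n + 1) :=
      pow_le_pow_right₀ hone_lt.le (Nat.le_succ n)
    linarith [hD n]
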